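/- Let q be an odd prime power, d ≥ 1, E ⊆ F_q^d nonempty, and a > 1 a real number. Then there exists Y ⊆ F_q^d with |Y| ≥ ((a-1)/a) q^d such that for every y ∈ Y, the pinned distance set Δ_y(E) = {||x-y|| : x ∈ E} satisfies |Δ_y(E)| ≥ min{q/(2a), |E|/(2a)}. -/

import Mathlib

set_option maxHeartbeats 1000000

open Finset

lemma linear_count {F : Type*} [Field F] [Fintype F] [DecidableEq F] {d : ℕ}
    (hd : 1 ≤ d) (b : Fin d → F) (hb : b ≠ 0) (c : F) :
    (Finset.univ.filter (fun y : Fin d → F => ∑ i, b i * y i = c)).card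
      = Fintype.card F ^ (d - 1) := by
  classical
  set f : (Fin d → F) → F := fun y => ∑ i, b i * y i with hf
  obtain ⟨i0, hb0⟩ : ∃ i, b i ≠ 0 := by
    by_contra h
    push_neg at h
    exact hb (funext h)
  have hsol : ∀ v : F, f (fun j => if j = i0 then v / b i0 else 0) = v := by
    intro v
    simp only [f]
    rw [Finset.sum_eq_single i0]
    · simp [div_eq_iff hb0, mul_comm]
      field_simp
    · intro j _ hj; simp [hj]
    · simp
  have hadd : ∀ y z, f (y + z) = f y + f z := by
    intro y z
    simp only [f, Pi.add_apply, mul_add, Finset.sum_add_distrib]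
  have hfib : ∀ v : F, (Finset.univ.filter (fun y => f y = v)).card
      = (Finset.univ.filter (fun y => f y = 0)).card := by
    intro v
    apply Finset.card_nbij' (fun y => y - fun j => if j = i0 then v / b i0 else 0)
      (fun y => y + fun j => if j = i0 then v / b i0 else 0)
    · intro y hy
      simp only [Finset.mem_coe, mem_filter, mem_univ, true_and] at hy ⊢
      have := hadd (y - fun j => if j = i0 then v / b i0 else 0)
        (fun j => if j = i0 then v / b i0 else 0)
      rw [sub_add_cancel, hy, hsol] at this
      linear_combination -this
    · intro y hy
      simp only [Finset.mem_coe, mem_filter, mem_univ, true_and] at hy ⊢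
      rw [hadd, hy, hsol, zero_add]
    · intro y _; simp
    · intro y _; simp
  have hsum : Fintype.card (Fin d → F) = ∑ v : F, (Finset.univ.filter (fun y => f y = v)).card := by
    rw [← Finset.card_univ]
    exact Finset.card_eq_sum_card_fiberwise (fun y _ => Finset.mem_univ (f y))
  have hcard : Fintype.card (Fin d → F) = Fintype.card F ^ d := by
    simp [Fintype.card_pi]
  have hq0 : 0 < Fintype.card F := Fintype.card_pos
  have : Fintype.card F ^ d = Fintype.card F * (Finset.univ.filter (fun y => f y = 0)).card := by
    rw [← hcard, hsum]
    rw [Finset.sum_congr rfl (fun v _ => hfib v)]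
    simp [mul_comm]
  have hpow : Fintype.card F ^ d = Fintype.card F * Fintype.card F ^ (d - 1) := by
    conv_lhs => rw [← Nat.succ_pred_eq_of_pos hd]
    rw [pow_succ, mul_comm]
    simp [Nat.pred_eq_sub_one]
  rw [hpow] at this
  have := Nat.eq_of_mul_eq_mul_left hq0 this
  rw [hfib c, ← this]

lemma hyperplane_count {F : Type*} [Field F] [Fintype F] [DecidableEq F] {d : ℕ}
    (hd : 1 ≤ d) (h2 : (2 : F) ≠ 0) (x x' : Fin d → F) (hxx : x ≠ x') :
    (Finset.univ.filter (fun y : Fin d → F =>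
        ∑ i, (x i - y i) ^ 2 = ∑ i, (x' i - y i) ^ 2)).card
      = Fintype.card F ^ (d - 1) := by
  classical
  have key : ∀ y : Fin d → F,
      (∑ i, (x i - y i) ^ 2 = ∑ i, (x' i - y i) ^ 2)
        ↔ ∑ i, (2 * (x' i - x i)) * y i = ∑ i, (x' i ^ 2 - x i ^ 2) := by
    intro y
    rw [← sub_eq_zero, ← sub_eq_zero (a := ∑ i, (2 * (x' i - x i)) * y i),
      ← Finset.sum_sub_distrib, ← Finset.sum_sub_distrib]
    constructor <;> intro h <;> rw [← h] <;> apply Finset.sum_congr rfl <;>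
      intro i _ <;> ring
  have hb : (fun i => 2 * (x' i - x i)) ≠ 0 := by
    intro h
    apply hxx
    funext i
    have := congrFun h i
    simp only [Pi.zero_apply, mul_eq_zero, sub_eq_zero] at this
    rcases this with h' | h'
    · exact absurd h' h2
    · exact h'.symm
  rw [Finset.filter_congr (fun y _ => by rw [key y])]
  exact linear_count hd _ hb _

theorem main_pinned_distance (q d : ℕ) (F : Type*) [Field F] [Fintype F] [DecidableEq F]
    (hq : Fintype.card F = q) (hodd : Odd q) (hd : 1 ≤ d)
    (E : Finset (Fin d → F)) (hE : E.Nonempty) (a : ℝ) (ha : 1 < a) :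
    ∃ Y : Finset (Fin d → F), ((Y.card : ℝ) ≥ (a - 1) / a * q ^ d) ∧
      ∀ y ∈ Y, ((E.image (fun x => ∑ i, (x i - y i) ^ 2)).card : ℝ)
        ≥ min ((q : ℝ) / (2 * a)) ((E.card : ℝ) / (2 * a)) := by
  classical
  have hq0 : 0 < q := hq ▸ Fintype.card_pos
  have ha0 : (0 : ℝ) < a := by linarith
  -- characteristic not two
  have h2 : (2 : F) ≠ 0 := by
    intro h20
    have hdvd : ringChar F ∣ 2 := by
      have : ((2 : ℕ) : F) = 0 := by exact_mod_cast h20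
      exact ringChar.dvd this
    have := ((Nat.dvd_prime Nat.prime_two).mp hdvd).resolve_left CharP.ringChar_ne_one
    have heven := FiniteField.even_card_of_char_two this
    rw [hq] at heven
    have := Nat.odd_iff.mp hodd
    omega
  set f : (Fin d → F) → (Fin d → F) → F := fun y x => ∑ i, (x i - y i) ^ 2 with hfdef
  set e : (Fin d → F) → ℕ :=
    fun y => ((E ×ˢ E).filter (fun p => f y p.1 = f y p.2)).card with hedef
  have hVcard : Fintype.card (Fin d → F) = q ^ d := by simp [Fintype.card_pi, hq]
  -- Cauchy-Schwarz: E.card ^ 2 ≤ Δ_y.card * e y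
  have hCS : ∀ y : Fin d → F,
      ((E.card : ℝ)) ^ 2 ≤ ((E.image (f y)).card : ℝ) * (e y : ℝ) := by
    intro y
    set Δ := E.image (f y) with hΔ
    have hEc : E.card = ∑ t ∈ Δ, (E.filter (fun x => f y x = t)).card :=
      Finset.card_eq_sum_card_fiberwise (fun x hx => Finset.mem_image_of_mem _ hx)
    have hey : e y = ∑ t ∈ Δ, ((E.filter (fun x => f y x = t)).card) ^ 2 := by
      have h1 : e y = ∑ t ∈ Δ,
          (((E ×ˢ E).filter (fun p => f y p.1 = f y p.2)).filter
            (fun p => f y p.1 = t)).card :=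
        Finset.card_eq_sum_card_fiberwise (fun p hp => by
          simp only [Finset.mem_coe, Finset.mem_filter, Finset.mem_product] at hp
          exact Finset.mem_image_of_mem _ hp.1.1)
      rw [h1]
      apply Finset.sum_congr rfl
      intro t _
      have : (((E ×ˢ E).filter (fun p => f y p.1 = f y p.2)).filter (fun p => f y p.1 = t))
          = (E.filter (fun x => f y x = t)) ×ˢ (E.filter (fun x => f y x = t)) := by
        ext p
        simp only [Finset.mem_filter, Finset.mem_product]
        constructor
        · rintro ⟨⟨⟨h1, h2⟩, h3⟩, h4⟩
          exact ⟨⟨h1, h4⟩, h2, h3 ▸ h4⟩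
        · rintro ⟨⟨h1, h2⟩, h3, h4⟩
          exact ⟨⟨⟨h1, h3⟩, by rw [h2, h4]⟩, h2⟩
      rw [this, Finset.card_product, sq]
    have hcast : (E.card : ℝ) = ∑ t ∈ Δ, ((E.filter (fun x => f y x = t)).card : ℝ) := by
      rw [hEc]; push_cast; ring
    have heycast : (e y : ℝ) = ∑ t ∈ Δ, ((E.filter (fun x => f y x = t)).card : ℝ) ^ 2 := by
      rw [hey]; push_cast; ring
    rw [hcast, heycast]
    exact sq_sum_le_card_mul_sum_sq
  -- energy is positive
  have hepos : ∀ y : Fin d → F, 0 < e y := by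
    intro y
    obtain ⟨x, hx⟩ := hE
    apply Finset.card_pos.mpr
    exact ⟨(x, x), by simp [Finset.mem_filter, Finset.mem_product, hx]⟩
  -- total energy bound
  set B : ℕ := E.card * q ^ d + E.card ^ 2 * q ^ (d - 1) with hBdef
  have hSbound : ∑ y : Fin d → F, e y ≤ B := by
    have hswap : ∑ y : Fin d → F, e y
        = ∑ p ∈ E ×ˢ E, (univ.filter (fun y : Fin d → F => f y p.1 = f y p.2)).card := by
      simp only [hedef, Finset.card_filter]
      rw [Finset.sum_comm]
    rw [hswap]
    rw [← Finset.sum_filter_add_sum_filter_not (E ×ˢ E) (fun p => p.1 = p.2)]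
    have hb1 : ∑ p ∈ (E ×ˢ E).filter (fun p => p.1 = p.2),
        (univ.filter (fun y : Fin d → F => f y p.1 = f y p.2)).card ≤ E.card * q ^ d := by
      calc ∑ p ∈ (E ×ˢ E).filter (fun p => p.1 = p.2),
            (univ.filter (fun y : Fin d → F => f y p.1 = f y p.2)).card
          ≤ ∑ _p ∈ (E ×ˢ E).filter (fun p => p.1 = p.2), q ^ d := by
            apply Finset.sum_le_sum
            intro p _
            calc (univ.filter (fun y : Fin d → F => f y p.1 = f y p.2)).card
                ≤ (univ : Finset (Fin d → F)).card := Finset.card_filter_le _ _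
              _ = q ^ d := by rw [Finset.card_univ, hVcard]
        _ = ((E ×ˢ E).filter (fun p => p.1 = p.2)).card * q ^ d := by
            rw [Finset.sum_const, smul_eq_mul]
        _ ≤ E.card * q ^ d := by
            apply Nat.mul_le_mul_right
            apply Finset.card_le_card_of_injOn (fun p => p.1)
            · intro p hp
              simp only [Finset.mem_coe, Finset.mem_filter, Finset.mem_product] at hp
              exact hp.1.1
            · intro p hp p' hp' hpp
              simp only [Finset.mem_coe, Finset.mem_filter] at hp hp'
              have h1 : p.1 = p'.1 := hpp
              exact Prod.ext h1 (by rw [← hp.2, ← hp'.2, h1])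
        _ = E.card * q ^ d := rfl
    have hb2 : ∑ p ∈ (E ×ˢ E).filter (fun p => ¬ p.1 = p.2),
        (univ.filter (fun y : Fin d → F => f y p.1 = f y p.2)).card
          ≤ E.card ^ 2 * q ^ (d - 1) := by
      calc ∑ p ∈ (E ×ˢ E).filter (fun p => ¬ p.1 = p.2),
            (univ.filter (fun y : Fin d → F => f y p.1 = f y p.2)).card
          = ∑ _p ∈ (E ×ˢ E).filter (fun p => ¬ p.1 = p.2), q ^ (d - 1) := by
            apply Finset.sum_congr rfl
            intro p hp
            simp only [Finset.mem_filter] at hp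
            have := hyperplane_count hd h2 p.1 p.2 hp.2
            rw [hq] at this
            exact this
        _ = ((E ×ˢ E).filter (fun p => ¬ p.1 = p.2)).card * q ^ (d - 1) := by
            rw [Finset.sum_const, smul_eq_mul]
        _ ≤ (E ×ˢ E).card * q ^ (d - 1) :=
            Nat.mul_le_mul_right _ (Finset.card_filter_le _ _)
        _ = E.card ^ 2 * q ^ (d - 1) := by rw [Finset.card_product, sq]
    exact Nat.add_le_add hb1 hb2
  -- Markov
  set Y : Finset (Fin d → F) :=
    univ.filter (fun y => ((e y : ℝ)) * (q : ℝ) ^ d ≤ a * (B : ℝ)) with hYdef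
  set Z : Finset (Fin d → F) :=
    univ.filter (fun y => ¬ (((e y : ℝ)) * (q : ℝ) ^ d ≤ a * (B : ℝ))) with hZdef
  have hYZ : Y.card + Z.card = q ^ d := by
    rw [hYdef, hZdef, Finset.card_filter_add_card_filter_not, Finset.card_univ, hVcard]
  have hBpos : (0 : ℝ) < (B : ℝ) := by
    have : 0 < B := by
      have h1 : 0 < E.card := Finset.card_pos.mpr hE
      have h2' : 0 < q ^ d := Nat.pow_pos hq0
      positivity
    exact_mod_cast this
  have hqd : (0:ℝ) < (q:ℝ) ^ d := by positivity
  have hZcard : (Z.card : ℝ) * a ≤ (q : ℝ) ^ d := by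
    have hlow : (Z.card : ℝ) * (a * B) ≤ ∑ y ∈ Z, ((e y : ℝ) * (q : ℝ) ^ d) := by
      have := Finset.card_nsmul_le_sum Z (fun y => (e y : ℝ) * (q : ℝ) ^ d) (a * B)
        (fun y hy => by
          rw [hZdef, Finset.mem_filter] at hy
          exact le_of_lt (lt_of_not_ge hy.2))
      simpa [nsmul_eq_mul] using this
    have hup : ∑ y ∈ Z, ((e y : ℝ) * (q : ℝ) ^ d) ≤ (B : ℝ) * (q : ℝ) ^ d := by
      rw [← Finset.sum_mul]
      apply mul_le_mul_of_nonneg_right _ (le_of_lt hqd)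
      calc ∑ y ∈ Z, (e y : ℝ) ≤ ∑ y : Fin d → F, (e y : ℝ) := by
            apply Finset.sum_le_sum_of_subset_of_nonneg (Finset.subset_univ Z)
            intro y _ _; positivity
        _ ≤ (B : ℝ) := by exact_mod_cast hSbound
    have h := le_trans hlow hup
    have h' : ((Z.card : ℝ) * a) * (B : ℝ) ≤ (q : ℝ) ^ d * (B : ℝ) := by
      calc ((Z.card : ℝ) * a) * (B : ℝ) = (Z.card : ℝ) * (a * (B : ℝ)) := by ring
        _ ≤ (B : ℝ) * (q : ℝ) ^ d := h
        _ = (q : ℝ) ^ d * (B : ℝ) := by ring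
    exact le_of_mul_le_mul_right h' hBpos
  refine ⟨Y, ?_, ?_⟩
  · -- Y.card ≥ (a-1)/a * q^d
    have hYc : (Y.card : ℝ) = (q : ℝ) ^ d - (Z.card : ℝ) := by
      have h0 : ((Y.card + Z.card : ℕ) : ℝ) = ((q ^ d : ℕ) : ℝ) := by
        exact_mod_cast congrArg (Nat.cast : ℕ → ℝ) hYZ
      push_cast at h0
      linarith
    rw [ge_iff_le, hYc, div_mul_eq_mul_div, div_le_iff₀ ha0]
    nlinarith [hZcard]
  · intro y hy
    rw [hYdef, Finset.mem_filter] at hy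
    have hyB : (e y : ℝ) * (q : ℝ) ^ d ≤ a * (B : ℝ) := hy.2
    have h1 := hCS y
    set D : ℝ := ((E.image (f y)).card : ℝ) with hD
    set n : ℝ := (E.card : ℝ) with hn
    set Q : ℝ := (q : ℝ) with hQ
    have hn1 : (1:ℝ) ≤ n := by
      rw [hn]; exact_mod_cast Finset.card_pos.mpr hE
    have hQ1 : (1:ℝ) ≤ Q := by rw [hQ]; exact_mod_cast hq0
    have hey0 : (0:ℝ) < (e y : ℝ) := by exact_mod_cast hepos y
    have hP0 : (0:ℝ) < Q ^ (d-1) := by positivity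
    have hQd : Q ^ d = Q ^ (d-1) * Q := by
      conv_lhs => rw [← Nat.succ_pred_eq_of_pos hd]
      rw [pow_succ]
      congr 1
    have hBcast : (B : ℝ) = n * Q ^ d + n ^ 2 * Q ^ (d - 1) := by
      rw [hBdef, hn, hQ]; push_cast; ring
    set m : ℝ := min Q n with hm
    have hm0 : 0 < m := lt_min (by linarith) (by linarith)
    have hmQ : m ≤ Q := min_le_left _ _
    have hmn : m ≤ n := min_le_right _ _
    -- key inequality : m * (e y) ≤ 2 * a * n ^ 2
    have hkey : m * (e y : ℝ) ≤ 2 * a * n ^ 2 := by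
      have h3 : m * ((e y : ℝ) * Q ^ d) ≤ m * (a * (B : ℝ)) :=
        mul_le_mul_of_nonneg_left hyB (le_of_lt hm0)
      have h4 : m * (a * (B : ℝ)) ≤ 2 * a * n ^ 2 * Q ^ d := by
        rw [hBcast, hQd]
        have hnQ : (0:ℝ) ≤ n * Q := by positivity
        have t : m * (n * Q + n ^ 2) ≤ 2 * n ^ 2 * Q := by
          nlinarith [mul_le_mul_of_nonneg_right hmn hnQ,
            mul_le_mul_of_nonneg_right hmQ (sq_nonneg n)]
        have t2 := mul_le_mul_of_nonneg_left t (show (0:ℝ) ≤ a * Q ^ (d-1) by positivity)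
        calc m * (a * (n * (Q ^ (d-1) * Q) + n ^ 2 * Q ^ (d-1)))
            = (a * Q ^ (d-1)) * (m * (n * Q + n ^ 2)) := by ring
          _ ≤ (a * Q ^ (d-1)) * (2 * n ^ 2 * Q) := t2
          _ = 2 * a * n ^ 2 * (Q ^ (d-1) * Q) := by ring
      have h5 : m * (e y : ℝ) * Q ^ d ≤ 2 * a * n ^ 2 * Q ^ d := by
        calc m * (e y : ℝ) * Q ^ d = m * ((e y : ℝ) * Q ^ d) := by ring
          _ ≤ m * (a * (B : ℝ)) := h3
          _ ≤ 2 * a * n ^ 2 * Q ^ d := h4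
      have hQd0 : (0:ℝ) < Q ^ d := by positivity
      exact le_of_mul_le_mul_right h5 hQd0
    -- conclude
    have hDge : m / (2 * a) ≤ D := by
      rw [div_le_iff₀ (by positivity)]
      -- m ≤ D * (2 * a) ; since m * ey ≤ 2 a n^2 ≤ 2 a D ey
      have h6 : m * (e y : ℝ) ≤ D * (2 * a) * (e y : ℝ) := by
        calc m * (e y : ℝ) ≤ 2 * a * n ^ 2 := hkey
          _ ≤ 2 * a * (D * (e y : ℝ)) := by
              apply mul_le_mul_of_nonneg_left h1 (by positivity)
          _ = D * (2 * a) * (e y : ℝ) := by ring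
      exact le_of_mul_le_mul_right h6 hey0
    rw [ge_iff_le, min_div_div_right (by positivity : (0:ℝ) ≤ 2 * a)]
    exact hDge
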